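/- Let Γ be a finite group, N a normal subgroup, and Λ a subgroup. Set G = Γ/N, let G' = ΛN/N be the image of Λ in G, and let l = [ΛN : Λ]. For a homomorphism χ : G' → Q/Z, let χ̃ : Λ → Q/Z denote its inflation, i.e. the composition of the natural map Λ → ΛN/N = G' with χ. Then the corestriction of χ̃ from Λ to Γ equals l times the inflation to Γ of the corestriction of χ from G' to G; that is, χ̃ ∘ V_{Γ→Λ} = l · ((χ ∘ V_{G→G'}) ∘ π) as homomorphisms Γ → Q/Z, where V denotes the transfer homomorphism and π : Γ → G is the quotient map. -/

import Mathlib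

open Subgroup Subgroup.leftTransversals MulAction in
lemma transfer_eq_prod_section {G : Type*} [Group G] {H : Subgroup G} {A : Type*} [CommGroup A]
    (ϕ : H →* A) [H.FiniteIndex] [inst : Fintype (G ⧸ H)] (f : G ⧸ H → G)
    (hf : ∀ q, ((f q : G) : G ⧸ H) = q) (g : G)
    (mem : ∀ q : G ⧸ H, (f q)⁻¹ * g * f (g⁻¹ • q) ∈ H) :
    MonoidHom.transfer ϕ g = ∏ q : G ⧸ H, ϕ ⟨(f q)⁻¹ * g * f (g⁻¹ • q), mem q⟩ := by
  classical
  set T : H.LeftTransversal := ⟨Set.range f, isComplement_range_left hf⟩ with hT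
  rw [MonoidHom.transfer_def ϕ T g]
  unfold Subgroup.leftTransversals.diff
  have hinst : H.fintypeQuotientOfFiniteIndex = inst := Subsingleton.elim _ _
  rw [hinst]
  refine Finset.prod_congr rfl fun q _ => congrArg ϕ (Subtype.ext ?_)
  have h1 : ((T.2.leftQuotientEquiv q : G)) = f q :=
    Subgroup.IsComplement.leftQuotientEquiv_apply hf q
  have h2 : (((g • T).2.leftQuotientEquiv q : G))
      = g • (T.2.leftQuotientEquiv (g⁻¹ • q) : G) :=
    smul_apply_eq_smul_apply_inv_smul g T q
  have h3 : ((T.2.leftQuotientEquiv (g⁻¹ • q) : G)) = f (g⁻¹ • q) :=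
    Subgroup.IsComplement.leftQuotientEquiv_apply hf _
  show (T.2.leftQuotientEquiv q : G)⁻¹ * ((g • T).2.leftQuotientEquiv q : G) = _
  rw [h1, h2, h3, smul_eq_mul]
  exact (mul_assoc _ _ _).symm

lemma out_conj_mem {G : Type*} [Group G] {H : Subgroup G} (g : G) (q : G ⧸ H) :
    (Quotient.out q)⁻¹ * g * Quotient.out (g⁻¹ • q) ∈ H := by
  rw [mul_assoc, ← QuotientGroup.eq, QuotientGroup.out_eq']
  symm
  calc (QuotientGroup.mk (g * Quotient.out (g⁻¹ • q)) : G ⧸ H)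
      = g • QuotientGroup.mk (Quotient.out (g⁻¹ • q)) :=
        (MulAction.Quotient.smul_mk H g _).symm
    _ = g • (g⁻¹ • q) := by rw [QuotientGroup.out_eq']
    _ = q := smul_inv_smul g q

theorem transfer_inflation_gen {Γ Q : Type*} [Group Γ] [Finite Γ] [Group Q] [Finite Q] (Λ : Subgroup Γ)
    {A : Type*} [CommGroup A] (π : Γ →* Q) (hsurj : Function.Surjective π)
    (χ : ↥(Λ.map π) →* A) :
    MonoidHom.transfer
        (χ.comp (MonoidHom.codRestrict (π.domRestrict Λ) (Λ.map π) (fun x => ⟨(x : Γ), x.2, rfl⟩))) =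
      ((MonoidHom.transfer χ).comp π) ^ (Λ.relIndex (Λ ⊔ π.ker)) := by
  classical
  letI : Fintype (Γ ⧸ Λ) := Fintype.ofFinite _
  letI : Fintype (Q ⧸ Λ.map π) := Fintype.ofFinite _
  -- the induced map on coset spaces
  have hp : ∀ a b : Γ, (QuotientGroup.leftRel Λ).r a b →
      (QuotientGroup.leftRel (Λ.map π)).r (π a) (π b) := by
    intro a b hab
    rw [QuotientGroup.leftRel_apply] at hab ⊢
    rw [← map_inv, ← map_mul]
    exact ⟨_, hab, rfl⟩
  set p : Γ ⧸ Λ → Q ⧸ Λ.map π := Quotient.map' π hp with hpdef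
  have pmk : ∀ y : Γ, p (QuotientGroup.mk y) = QuotientGroup.mk (π y) := fun y => rfl
  have pequi : ∀ (y : Γ) (q : Γ ⧸ Λ), p (y • q) = (π y) • p q := by
    intro y q
    induction q using Quotient.inductionOn' with
    | h z =>
      have : (Quotient.mk'' z : Γ ⧸ Λ) = QuotientGroup.mk z := rfl
      rw [this, MulAction.Quotient.smul_mk, pmk, pmk, smul_eq_mul, map_mul,
        MulAction.Quotient.smul_mk, smul_eq_mul]
  have hKmem : ∀ z : Γ, π z ∈ Λ.map π ↔ z ∈ Λ ⊔ π.ker := by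
    intro z
    rw [← Subgroup.comap_map_eq]
    exact (Subgroup.mem_comap).symm
  have psurj : Function.Surjective p := by
    intro q'
    obtain ⟨w, hw⟩ := QuotientGroup.mk_surjective q'
    obtain ⟨x, hx⟩ := hsurj w
    exact ⟨QuotientGroup.mk x, by rw [pmk, hx, hw]⟩
  have card_fiber : ∀ q' : Q ⧸ Λ.map π,
      (Finset.univ.filter (fun q => p q = q')).card = Λ.relIndex (Λ ⊔ π.ker) := by
    intro q'
    obtain ⟨q0, hq0⟩ := psurj q'
    obtain ⟨x, rfl⟩ := QuotientGroup.mk_surjective q0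
    set K := Λ ⊔ π.ker with hK
    have hsound : ∀ a b : ↥K, (QuotientGroup.leftRel (Λ.subgroupOf K)).r a b →
        (QuotientGroup.leftRel Λ).r (x * (a : Γ)) (x * (b : Γ)) := by
      intro a b hab
      rw [QuotientGroup.leftRel_apply] at hab ⊢
      rw [Subgroup.mem_subgroupOf] at hab
      simpa [mul_assoc] using hab
    set φ : ↥K ⧸ Λ.subgroupOf K → Γ ⧸ Λ := Quotient.map' (fun k => x * (k : Γ)) hsound with hφ
    have φmk : ∀ k : ↥K, φ (Quotient.mk'' k) = QuotientGroup.mk (x * (k : Γ)) := fun _ => rfl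
    have hinj : Function.Injective φ := by
      intro a b
      induction a using Quotient.inductionOn' with
      | h k₁ =>
      induction b using Quotient.inductionOn' with
      | h k₂ =>
      intro hab
      rw [φmk, φmk, QuotientGroup.eq] at hab
      refine Quotient.sound' (QuotientGroup.leftRel_apply.mpr ?_)
      rw [Subgroup.mem_subgroupOf]
      simpa [mul_assoc] using hab
    have hchar : ∀ y : Γ, p (QuotientGroup.mk y) = q' ↔ x⁻¹ * y ∈ K := by
      intro y
      rw [pmk, ← hq0, pmk, eq_comm, QuotientGroup.eq, ← map_inv, ← map_mul]
      exact hKmem _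
    have hrange : ∀ q : Γ ⧸ Λ, p q = q' ↔ q ∈ Set.range φ := by
      intro q
      induction q using Quotient.inductionOn' with
      | h y =>
      have hqy : (Quotient.mk'' y : Γ ⧸ Λ) = QuotientGroup.mk y := rfl
      rw [hqy, hchar y]
      constructor
      · intro h
        refine ⟨Quotient.mk'' ⟨x⁻¹ * y, h⟩, ?_⟩
        rw [φmk]
        simp
      · rintro ⟨k, hk⟩
        induction k using Quotient.inductionOn' with
        | h k =>
        rw [φmk, QuotientGroup.eq] at hk
        have hxy : x⁻¹ * y = ↑k * ((x * ↑k)⁻¹ * y) := by group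
        rw [hxy]
        exact mul_mem k.2 ((le_sup_left : Λ ≤ K) hk)
    calc (Finset.univ.filter (fun q => p q = q')).card
        = Fintype.card {q : Γ ⧸ Λ // p q = q'} := (Fintype.card_subtype _).symm
      _ = Nat.card {q : Γ ⧸ Λ // p q = q'} := (Nat.card_eq_fintype_card).symm
      _ = Nat.card {q : Γ ⧸ Λ // q ∈ Set.range φ} :=
          Nat.card_congr (Equiv.subtypeEquivRight fun q => by rw [hrange q])
      _ = Nat.card (↥K ⧸ Λ.subgroupOf K) := (Nat.card_congr (Equiv.ofInjective φ hinj)).symm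
      _ = Λ.relIndex K := rfl
  ext g
  simp only [MonoidHom.coe_comp, Function.comp_apply, MonoidHom.pow_apply]
  -- abbreviations
  set χh : Q → A := fun a => if h : a ∈ Λ.map π then χ ⟨a, h⟩ else 1 with hχh
  have χh_mem : ∀ (a) (h : a ∈ Λ.map π), χh a = χ ⟨a, h⟩ := fun a h => dif_pos h
  have χh_mul : ∀ a b, a ∈ Λ.map π → b ∈ Λ.map π → χh (a * b) = χh a * χh b := by
    intro a b ha hb
    rw [χh_mem a ha, χh_mem b hb, χh_mem _ (mul_mem ha hb), ← map_mul]
    rfl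
  have χh_inv : ∀ a, a ∈ Λ.map π → χh a⁻¹ = (χh a)⁻¹ := by
    intro a ha
    rw [χh_mem _ (inv_mem ha), χh_mem a ha, ← map_inv]
    rfl
  set c : Q ⧸ Λ.map π → Q :=
    fun q' => (Quotient.out q')⁻¹ * (π g) * Quotient.out ((π g)⁻¹ • q') with hc
  have c_mem : ∀ q', c q' ∈ Λ.map π := fun q' => out_conj_mem (π g) q'
  set hq : Γ ⧸ Λ → Q := fun q => (Quotient.out (p q))⁻¹ * π (Quotient.out q) with hhq
  have hq_mem : ∀ q, hq q ∈ Λ.map π := by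
    intro q
    have h1 : (QuotientGroup.mk (Quotient.out (p q)) : Q ⧸ Λ.map π) = p q :=
      QuotientGroup.out_eq' _
    have h2 : (QuotientGroup.mk (π (Quotient.out q)) : Q ⧸ Λ.map π) = p q := by
      rw [← pmk, QuotientGroup.out_eq']
    exact (QuotientGroup.eq).mp (h1.trans h2.symm)
  have key : ∀ q : Γ ⧸ Λ, π ((Quotient.out q)⁻¹ * g * Quotient.out (g⁻¹ • q))
      = (hq q)⁻¹ * c (p q) * hq (g⁻¹ • q) := by
    intro q
    have hpq : p (g⁻¹ • q) = (π g)⁻¹ • p q := by rw [pequi, map_inv]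
    have hdq : π (Quotient.out q) = Quotient.out (p q) * hq q := by
      rw [hhq]; simp [mul_inv_cancel_left]
    have hdq' : π (Quotient.out (g⁻¹ • q)) = Quotient.out ((π g)⁻¹ • p q) * hq (g⁻¹ • q) := by
      rw [hhq]; simp [hpq, mul_inv_cancel_left]
    rw [map_mul, map_mul, map_inv, hdq, hdq', hc]
    group
  rw [transfer_eq_prod_section _ Quotient.out (fun q => QuotientGroup.out_eq' q) g
    (fun q => out_conj_mem g q)]
  calc (∏ q : Γ ⧸ Λ, (χ.comp (MonoidHom.codRestrict (π.domRestrict Λ) (Λ.map π)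
          (fun x => ⟨(x : Γ), x.2, rfl⟩)))
          ⟨(Quotient.out q)⁻¹ * g * Quotient.out (g⁻¹ • q), out_conj_mem g q⟩)
      = ∏ q : Γ ⧸ Λ, χh (π ((Quotient.out q)⁻¹ * g * Quotient.out (g⁻¹ • q))) := by
        refine Finset.prod_congr rfl fun q _ => ?_
        rw [χh_mem _ ⟨_, out_conj_mem g q, rfl⟩]
        rfl
    _ = ∏ q : Γ ⧸ Λ, (χh (hq q))⁻¹ * χh (c (p q)) * χh (hq (g⁻¹ • q)) := by
        refine Finset.prod_congr rfl fun q _ => ?_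
        rw [key q, χh_mul _ _ (mul_mem (inv_mem (hq_mem q)) (c_mem _)) (hq_mem _),
          χh_mul _ _ (inv_mem (hq_mem q)) (c_mem _), χh_inv _ (hq_mem q)]
    _ = ((∏ q : Γ ⧸ Λ, (χh (hq q))⁻¹) * ∏ q : Γ ⧸ Λ, χh (c (p q)))
          * ∏ q : Γ ⧸ Λ, χh (hq (g⁻¹ • q)) := by
        rw [Finset.prod_mul_distrib, Finset.prod_mul_distrib]
    _ = ((∏ q : Γ ⧸ Λ, χh (hq q))⁻¹ * ∏ q : Γ ⧸ Λ, χh (c (p q)))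
          * ∏ q : Γ ⧸ Λ, χh (hq q) := by
        rw [Finset.prod_inv_distrib]
        congr 1
        exact Fintype.prod_bijective (fun q => g⁻¹ • q) (MulAction.bijective g⁻¹) _ _
          (fun q => rfl)
    _ = ∏ q : Γ ⧸ Λ, χh (c (p q)) := by
        rw [mul_right_comm, inv_mul_cancel, one_mul]
    _ = ∏ q' : Q ⧸ Λ.map π, χh (c q') ^ Λ.relIndex (Λ ⊔ π.ker) := by
        rw [Finset.prod_comp (fun q' => χh (c q')) p, Finset.image_univ_of_surjective psurj]
        exact Finset.prod_congr rfl fun q' _ => by rw [card_fiber q']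
    _ = (∏ q' : Q ⧸ Λ.map π, χh (c q')) ^ Λ.relIndex (Λ ⊔ π.ker) := by
        rw [Finset.prod_pow]
    _ = (MonoidHom.transfer χ (π g)) ^ Λ.relIndex (Λ ⊔ π.ker) := by
        congr 1
        rw [transfer_eq_prod_section χ Quotient.out (fun q => QuotientGroup.out_eq' q) (π g)
          (fun q' => out_conj_mem (π g) q')]
        exact Finset.prod_congr rfl fun q' _ => χh_mem _ (c_mem q')

/-- Let `Γ` be a finite group, `N` a normal subgroup and `Λ` a subgroup. Set `G = Γ/N`,
let `G' = ΛN/N` be the image of `Λ` in `G` and `l = [ΛN : Λ]`. For a homomorphism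
`χ : G' → ℚ/ℤ`, let `χ̃ : Λ → ℚ/ℤ` be its inflation, i.e. the composition of the natural
map `Λ → ΛN/N = G'` with `χ`. Then the corestriction (transfer) of `χ̃` from `Λ` to `Γ`
equals `l` times the inflation to `Γ` of the corestriction of `χ` from `G'` to `G`:
`χ̃ ∘ V_{Γ→Λ} = l · ((χ ∘ V_{G→G'}) ∘ π)` where `π : Γ → G` is the quotient map.
(Homomorphisms to `ℚ/ℤ` are written multiplicatively, so `l ·` becomes the `l`-th power.) -/
theorem transfer_inflation (Γ : Type*) [Group Γ] [Finite Γ] (N Λ : Subgroup Γ) [N.Normal]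
    (χ : ↥(Λ.map (QuotientGroup.mk' N)) →* Multiplicative (AddCircle (1 : ℚ))) :
    MonoidHom.transfer
        (χ.comp (MonoidHom.codRestrict ((QuotientGroup.mk' N).domRestrict Λ)
          (Λ.map (QuotientGroup.mk' N)) (fun x => ⟨(x : Γ), x.2, rfl⟩))) =
      ((MonoidHom.transfer χ).comp (QuotientGroup.mk' N)) ^ (Λ.relIndex (Λ ⊔ N)) := by
  have h := transfer_inflation_gen Λ (QuotientGroup.mk' N) (QuotientGroup.mk'_surjective N) χ
  rw [QuotientGroup.ker_mk'] at h
  exact h
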